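/- Let T be a strictly positive, nondecreasing function of class C¹ on (0,∞). Let γ > 0 be a number such that T(γ) ≥ e, and let φ be a strictly positive, nondecreasing function on [e,∞) such that c_φ := ∫_e^∞ 1/(t·φ(t)) dt < ∞. Then the inequality T'(r) ≤ T(r)·φ(T(r)) holds for all r ≥ γ outside a set of Lebesgue measure not exceeding c_φ; that is, the set {r ∈ [γ,∞) : T'(r) > T(r)·φ(T(r))} has Lebesgue measure at most c_φ. -/

import Mathlib

open MeasureTheory Real Set

/-- **Borel Lemma.** Let `T` be a strictly positive nondecreasing `C¹` function on `(0,∞)`,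
`γ > 0` with `T γ ≥ e`, and `φ` a strictly positive nondecreasing function on `[e,∞)` with
`c_φ = ∫_e^∞ 1/(t φ(t)) dt < ∞`.  Then `T'(r) ≤ T(r) φ(T(r))` holds for `r ≥ γ` outside a set
of Lebesgue measure at most `c_φ`. -/
theorem borel_lemma
    (T T' φ : ℝ → ℝ)
    (hT_pos : ∀ r ∈ Ioi (0:ℝ), 0 < T r)
    (hT_mono : MonotoneOn T (Ioi 0))
    (hT_deriv : ∀ r ∈ Ioi (0:ℝ), HasDerivAt T (T' r) r)
    (hT'_cont : ContinuousOn T' (Ioi 0))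
    (γ : ℝ) (hγ : 0 < γ) (hTγ : Real.exp 1 ≤ T γ)
    (hφ_pos : ∀ t ∈ Ici (Real.exp 1), 0 < φ t)
    (hφ_mono : MonotoneOn φ (Ici (Real.exp 1)))
    (hφ_int : IntegrableOn (fun t => 1 / (t * φ t)) (Ici (Real.exp 1)) volume) :
    volume {r | r ∈ Ici γ ∧ T r * φ (T r) < T' r} ≤
      ENNReal.ofReal (∫ t in Ici (Real.exp 1), 1 / (t * φ t)) := by
  set e1 : ℝ := Real.exp 1 with he1
  have he1pos : (0:ℝ) < e1 := Real.exp_pos 1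
  -- monotone total modification of φ
  set ψ : ℝ → ℝ := fun t => φ (max e1 t) with hψdef
  have hψ_mono : Monotone ψ := fun a b hab =>
    hφ_mono (le_max_left e1 a) (le_max_left e1 b) (max_le_max le_rfl hab)
  have hψ_eq : ∀ t, e1 ≤ t → ψ t = φ t := fun t ht => by
    simp only [hψdef, max_eq_right ht]
  -- basic facts on [γ, ∞)
  have hγ_mem : γ ∈ Ioi (0:ℝ) := hγ
  have hmemIoi : ∀ r, γ ≤ r → r ∈ Ioi (0:ℝ) := fun r hr => lt_of_lt_of_le hγ hr
  have hTe : ∀ r, γ ≤ r → e1 ≤ T r := fun r hr =>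
    hTγ.trans (hT_mono hγ_mem (hmemIoi r hr) hr)
  set E : Set ℝ := {r | r ∈ Ici γ ∧ T r * φ (T r) < T' r} with hEdef
  -- continuous modifications of T and T'
  set Tc : ℝ → ℝ := fun r => T (max γ r) with hTc
  set T'c : ℝ → ℝ := fun r => T' (max γ r) with hT'c
  have hmaxIoi : ∀ r : ℝ, max γ r ∈ Ioi (0:ℝ) := fun r => lt_of_lt_of_le hγ (le_max_left _ _)
  have hTc_cont : Continuous Tc := by
    refine continuous_iff_continuousAt.mpr fun r => ?_
    exact ((hT_deriv _ (hmaxIoi r)).continuousAt).comp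
      ((continuous_const.max continuous_id).continuousAt)
  have hT'c_cont : Continuous T'c := by
    refine continuous_iff_continuousAt.mpr fun r => ?_
    exact (hT'_cont.continuousAt (Ioi_mem_nhds (hmaxIoi r))).comp
      ((continuous_const.max continuous_id).continuousAt)
  have hF_meas : Measurable fun r => T'c r - Tc r * ψ (Tc r) :=
    hT'c_cont.measurable.sub
      (hTc_cont.measurable.mul (hψ_mono.measurable.comp hTc_cont.measurable))
  have hE_eq : E = Ici γ ∩ (fun r => T'c r - Tc r * ψ (Tc r)) ⁻¹' Ioi 0 := by
    ext r
    simp only [hEdef, mem_setOf_eq, mem_inter_iff, mem_preimage, mem_Ioi, mem_Ici]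
    constructor
    · rintro ⟨hr, hlt⟩
      refine ⟨hr, ?_⟩
      have hmax : max γ r = r := max_eq_right hr
      simp only [hTc, hT'c, hmax, hψ_eq _ (hTe r hr)]
      linarith
    · rintro ⟨hr, hlt⟩
      have hmax : max γ r = r := max_eq_right hr
      simp only [hTc, hT'c, hmax, hψ_eq _ (hTe r hr)] at hlt
      exact ⟨hr, by linarith⟩
  have hE_meas : MeasurableSet E := by
    rw [hE_eq]; exact measurableSet_Ici.inter (hF_meas measurableSet_Ioi)
  -- the truncations
  set s : ℕ → Set ℝ := fun n => E ∩ Icc γ (γ + n) with hsdef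
  have hs_meas : ∀ n, MeasurableSet (s n) := fun n =>
    hE_meas.inter measurableSet_Icc
  have hs_mono : Monotone s := fun m n hmn =>
    inter_subset_inter_right _ (Icc_subset_Icc le_rfl (by
      have : (m:ℝ) ≤ n := Nat.cast_le.mpr hmn
      linarith))
  have hUnion : ⋃ n, s n = E := by
    apply Subset.antisymm
    · exact iUnion_subset fun n => inter_subset_left
    · intro r hr
      obtain ⟨n, hn⟩ := exists_nat_ge (r - γ)
      exact mem_iUnion.mpr ⟨n, hr, hr.1, by linarith⟩
  -- reduce to the truncations
  rw [← hUnion, hs_mono.measure_iUnion]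
  refine iSup_le fun n => ?_
  -- positivity facts on s n
  have hs_facts : ∀ x ∈ s n, γ ≤ x ∧ 0 < T x * φ (T x) ∧ T x * φ (T x) < T' x := by
    rintro x ⟨⟨hx1, hx2⟩, -⟩
    have hTx : e1 ≤ T x := hTe x hx1
    exact ⟨hx1, mul_pos (lt_of_lt_of_le he1pos hTx) (hφ_pos _ hTx), hx2⟩
  -- injectivity of T on s n
  have hstrict : ∀ a ∈ s n, ∀ b, a < b → γ ≤ b → T a < T b := by
    intro a ha b hab hbγ
    obtain ⟨haγ, hpos, hlt⟩ := hs_facts a ha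
    have ha0 : a ∈ Ioi (0:ℝ) := hmemIoi a haγ
    have hT'a : 0 < T' a := hpos.trans hlt
    have hcont : ContinuousAt T' a := hT'_cont.continuousAt (Ioi_mem_nhds ha0)
    have hev : ∀ᶠ z in nhds a, 0 < T' z := hcont.eventually (eventually_gt_nhds hT'a)
    obtain ⟨δ, hδpos, hδ⟩ := Metric.eventually_nhds_iff_ball.mp hev
    set b' : ℝ := min (a + δ / 2) b with hb'
    have hab' : a < b' := lt_min (by linarith) hab
    have hb'b : b' ≤ b := min_le_right _ _
    have hsub : Icc a b' ⊆ Ioi (0:ℝ) := fun z hz => lt_of_lt_of_le ha0 hz.1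
    have hmono : StrictMonoOn T (Icc a b') := by
      apply strictMonoOn_of_deriv_pos (convex_Icc a b')
      · exact fun z hz => ((hT_deriv z (hsub hz)).continuousAt).continuousWithinAt
      · intro z hz
        rw [interior_Icc] at hz
        rw [(hT_deriv z (hsub (Ioo_subset_Icc_self hz))).deriv]
        apply hδ
        rw [Metric.mem_ball, Real.dist_eq, abs_of_pos (by linarith [hz.1])]
        have : z < b' := hz.2
        have : b' ≤ a + δ / 2 := min_le_left _ _
        linarith
    calc T a < T b' := hmono (left_mem_Icc.mpr hab'.le) (right_mem_Icc.mpr hab'.le) hab'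
      _ ≤ T b := hT_mono (hsub (right_mem_Icc.mpr hab'.le)) (hmemIoi b hbγ) hb'b
  have hinj : InjOn T (s n) := by
    intro a ha b hb heq
    by_contra hne
    rcases lt_or_gt_of_ne hne with h | h
    · exact absurd heq (hstrict a ha b h (hs_facts b hb).1).ne
    · exact absurd heq.symm (hstrict b hb a h (hs_facts a ha).1).ne
  -- the ENNReal integrand
  set G : ℝ → ENNReal := fun t => ENNReal.ofReal (1 / (t * ψ t)) with hGdef
  -- pointwise lower bound
  have step1 : volume (s n) ≤ ∫⁻ x in s n, ENNReal.ofReal |T' x| * G (T x) := by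
    rw [← setLIntegral_one]
    refine lintegral_mono_ae ((ae_restrict_iff' (hs_meas n)).mpr (ae_of_all _ fun x hx => ?_))
    obtain ⟨hxγ, hpos, hlt⟩ := hs_facts x hx
    have hTx : e1 ≤ T x := hTe x hxγ
    have hT'x : 0 < T' x := hpos.trans hlt
    show (1:ENNReal) ≤ ENNReal.ofReal |T' x| * ENNReal.ofReal (1 / (T x * ψ (T x)))
    rw [hψ_eq _ hTx, abs_of_pos hT'x, ← ENNReal.ofReal_mul hT'x.le]
    refine le_trans (le_of_eq ENNReal.ofReal_one.symm) (ENNReal.ofReal_le_ofReal ?_)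
    rw [mul_one_div]
    exact (one_le_div hpos).mpr hlt.le
  -- change of variables
  have step2 : ∫⁻ x in s n, ENNReal.ofReal |T' x| * G (T x) = ∫⁻ t in T '' s n, G t := by
    have := lintegral_image_eq_lintegral_abs_det_fderiv_mul volume (hs_meas n)
      (f' := fun x => ContinuousLinearMap.smulRight (1 : ℝ →L[ℝ] ℝ) (T' x))
      (fun x hx =>
        ((hT_deriv x (hmemIoi x (hs_facts x hx).1)).hasDerivWithinAt).hasFDerivWithinAt)
      hinj G
    simpa only [ContinuousLinearMap.smulRight_one_eq_toSpanSingleton,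
        ContinuousLinearMap.det_toSpanSingleton] using this.symm
  -- comparison with the full integral
  have himg : T '' s n ⊆ Ici e1 := by
    rintro t ⟨x, hx, rfl⟩
    exact hTe x (hs_facts x hx).1
  have step3 : ∫⁻ t in T '' s n, G t ≤ ∫⁻ t in Ici e1, G t := lintegral_mono_set himg
  have step4 : ∫⁻ t in Ici e1, G t = ENNReal.ofReal (∫ t in Ici e1, 1 / (t * φ t)) := by
    rw [setLIntegral_congr_fun measurableSet_Ici
      (fun t (ht : e1 ≤ t) => by
        show ENNReal.ofReal (1 / (t * ψ t)) = ENNReal.ofReal (1 / (t * φ t))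
        rw [hψ_eq t ht])]
    refine (ofReal_integral_eq_lintegral_ofReal hφ_int
      ((ae_restrict_iff' measurableSet_Ici).mpr (ae_of_all _ fun t ht => ?_))).symm
    have h1 : 0 < t := lt_of_lt_of_le he1pos ht
    exact div_nonneg one_pos.le (mul_nonneg h1.le (hφ_pos t ht).le)
  exact step1.trans (step2.le.trans (step3.trans step4.le))
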